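/- Let X ⊆ ℝ^d, let h : X → ℝ, let α, β ≥ 0, let σ ∈ ℝ^d, c > 0, i ∈ {1, …, d}, and set σ' = σ + c e_i where e_i is the i-th standard basis vector. Suppose x ∈ X satisfies h(x) − ⟨σ, x⟩ ≤ inf_{z∈X} (h(z) − ⟨σ, z⟩) + α + β‖σ‖_1, and x' ∈ X satisfies h(x') − ⟨σ', x'⟩ ≤ inf_{z∈X} (h(z) − ⟨σ', z⟩) + α + β‖σ'‖_1. Then the i-th coordinates satisfy x'_i ≥ x_i − 2(α + β‖σ‖_1)/c − β. -/
import Mathlib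


open MeasureTheory

noncomputable section

/-- Standard inner product on `ℝ^d`. -/
def dotp {d : ℕ} (σ x : Fin d → ℝ) : ℝ := ∑ i, σ i * x i

/-- ℓ1 norm on `ℝ^d`. -/
def l1 {d : ℕ} (x : Fin d → ℝ) : ℝ := ∑ i, |x i|

/-- The `i`-th standard basis vector of `ℝ^d`. -/
def stdBasis {d : ℕ} (i : Fin d) : Fin d → ℝ := Pi.single i 1


lemma dotp_add_single {d : ℕ} (σ : Fin d → ℝ) (c : ℝ) (i : Fin d) (z : Fin d → ℝ) :
    dotp (σ + c • stdBasis i) z = dotp σ z + c * z i := by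
  unfold dotp
  have : ∀ j, (σ + c • stdBasis i) j * z j
      = σ j * z j + (if j = i then c * z j else 0) := by
    intro j
    by_cases hj : j = i <;> simp [hj, stdBasis, Pi.single_apply, add_mul]
  simp only [this, Finset.sum_add_distrib, Finset.sum_ite_eq' Finset.univ i,
    Finset.mem_univ, if_true]

lemma l1_add_single_le {d : ℕ} (σ : Fin d → ℝ) (c : ℝ) (hc : 0 ≤ c) (i : Fin d) :
    l1 (σ + c • stdBasis i) ≤ l1 σ + c := by
  unfold l1
  have h1 : ∀ j ∈ Finset.univ, |(σ + c • stdBasis i) j|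
      ≤ |σ j| + (if j = i then c else 0) := by
    intro j _
    by_cases hj : j = i
    · subst hj
      simpa [stdBasis, Pi.single_apply] using
        (abs_add_le (σ j) c).trans (by simp [abs_of_nonneg hc])
    · simp [hj, stdBasis, Pi.single_apply]
  calc ∑ j, |(σ + c • stdBasis i) j| ≤ ∑ j, (|σ j| + if j = i then c else 0) :=
        Finset.sum_le_sum h1
    _ = (∑ j, |σ j|) + c := by
        simp [Finset.sum_add_distrib, Finset.sum_ite_eq' Finset.univ i]

/-- **Monotonicity 1 (Lemma 2).** If `x` is an `(α,β)`-approximate minimizer of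
`h(·) - ⟨σ,·⟩` over `X` and `x'` is an `(α,β)`-approximate minimizer of
`h(·) - ⟨σ + c eᵢ,·⟩` over `X`, then `x'ᵢ ≥ xᵢ - 2(α + β‖σ‖₁)/c - β`. -/
theorem ftpl_monotonicity_one {d : ℕ} (X : Set (Fin d → ℝ)) (h : (Fin d → ℝ) → ℝ)
    (α β : ℝ) (hα : 0 ≤ α) (hβ : 0 ≤ β)
    (σ : Fin d → ℝ) (c : ℝ) (hc : 0 < c) (i : Fin d)
    (x x' : Fin d → ℝ) (hxX : x ∈ X) (hx'X : x' ∈ X)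
    (hx : ∀ z ∈ X, h x - dotp σ x ≤ h z - dotp σ z + (α + β * l1 σ))
    (hx' : ∀ z ∈ X,
      h x' - dotp (σ + c • stdBasis i) x' ≤
        h z - dotp (σ + c • stdBasis i) z + (α + β * l1 (σ + c • stdBasis i))) :
    x' i ≥ x i - 2 * (α + β * l1 σ) / c - β := by
  have h1 := hx x' hx'X
  have h2 := hx' x hxX
  rw [dotp_add_single, dotp_add_single] at h2
  have hl : l1 (σ + c • stdBasis i) ≤ l1 σ + c := l1_add_single_le σ c hc.le i
  have key : c * (x i - x' i) ≤ 2 * (α + β * l1 σ) + β * c := by nlinarith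
  have hd : x i - x' i ≤ 2 * (α + β * l1 σ) / c + β := by
    rw [div_add' _ _ _ hc.ne', le_div_iff₀ hc]
    nlinarith
  linarith
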